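/- Let (x_n,y_n)_{n∈ℕ} be a sequence of pairs of vertices of V such that every pair {x,y} of distinct vertices occurs as {x_n,y_n} for infinitely many n. Define 𝒞⁰ to be the partition of V into singletons and 𝒞^{n+1} = M_{x_n,y_n}(𝒞ⁿ). Then each 𝒞^{n+1} is coarser than 𝒞ⁿ, and the limiting partition (x ∼ y iff x ∼ y in 𝒞ⁿ for some n) equals the cumulatively merged partition 𝒞(G,r,α); in particular the limit does not depend on the choice of the sequence (x_n,y_n). -/

import Mathlib

open scoped ENNReal NNReal
open MeasureTheory

namespace CMPPaper

variable {V : Type*}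

/-- Graph distance between two subsets of vertices, valued in `ℝ≥0∞`
(`⊤` when one of the sets is empty). -/
noncomputable def setDist (G : SimpleGraph V) (A B : Set V) : ℝ≥0∞ :=
  ⨅ (x : A) (y : B), (G.dist x.1 y.1 : ℝ≥0∞)

/-- Total weight `r(A) = Σ_{x ∈ A} r(x) ∈ [0,∞]` of a set of vertices. -/
noncomputable def wt (r : V → ℝ≥0) (A : Set V) : ℝ≥0∞ :=
  ∑' x : A, (r x.1 : ℝ≥0∞)

/-- A partition (encoded as a setoid) of the vertex set is `(r,α)`-admissible if any two
distinct clusters `C ≠ C'` satisfy `d(C,C') > min(r(C), r(C'))^α`. -/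
def Admissible (G : SimpleGraph V) (r : V → ℝ≥0) (α : ℝ) (s : Setoid V) : Prop :=
  ∀ C ∈ s.classes, ∀ C' ∈ s.classes, C ≠ C' →
    (min (wt r C) (wt r C')) ^ α < setDist G C C'

/-- The cumulatively merged partition: the finest `(r,α)`-admissible partition, i.e. the
intersection (infimum as setoids) of all `(r,α)`-admissible partitions. -/
noncomputable def CMP (G : SimpleGraph V) (r : V → ℝ≥0) (α : ℝ) : Setoid V :=
  sInf {s : Setoid V | Admissible G r α s}

/-- The cluster of the CMP containing `x`. -/
def cluster (G : SimpleGraph V) (r : V → ℝ≥0) (α : ℝ) (x : V) : Set V :=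
  {y | (CMP G r α) x y}

/-- The ball `B(A, l) = {z : d(z,A) ≤ l}` around a set of vertices. -/
def ballSet (G : SimpleGraph V) (A : Set V) (l : ℝ≥0∞) : Set V :=
  {z | ∃ a ∈ A, (G.dist z a : ℝ≥0∞) ≤ l}

/-- A subset `H` of the vertices is stable if every cluster `C` of the CMP of the induced
subgraph on `H` (with the restricted weights) satisfies `B(C, r(C)^α) ⊆ H`. -/
def IsStable (G : SimpleGraph V) (r : V → ℝ≥0) (α : ℝ) (H : Set V) : Prop :=
  ∀ C ∈ (CMP (G.induce H) (fun x : H => r x) α).classes,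
    ballSet G (Subtype.val '' C) ((wt (fun x : H => r x) C) ^ α) ⊆ H

/-- The stabiliser of `W`: the smallest stable set containing `W`, i.e. the intersection of
all stable sets containing `W`. -/
def stabiliser (G : SimpleGraph V) (r : V → ℝ≥0) (α : ℝ) (W : Set V) : Set V :=
  ⋂₀ {H : Set V | IsStable G r α H ∧ W ⊆ H}

open Classical in
/-- The merging operator `M_{x,y}`: if the clusters of `x` and `y` are distinct and
`d(x,y) ≤ min(r(𝒞_x), r(𝒞_y))^α`, merge them (take the smallest coarsening of `s`
relating `x` and `y`); otherwise leave the partition unchanged. -/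
noncomputable def mergeOp (G : SimpleGraph V) (r : V → ℝ≥0) (α : ℝ) (x y : V)
    (s : Setoid V) : Setoid V :=
  if ¬ s x y ∧ (G.dist x y : ℝ≥0∞) ≤ (min (wt r {u | s x u}) (wt r {u | s y u})) ^ α then
    sInf {t : Setoid V | s ≤ t ∧ t x y}
  else s

/-- The relation `C ↦ C'` (`C'` descends from `C`) on clusters of the CMP. -/
def Descends (G : SimpleGraph V) (r : V → ℝ≥0) (α : ℝ) (C C' : Set V) : Prop :=
  C ∈ (CMP G r α).classes ∧ C' ∈ (CMP G r α).classes ∧ C ≠ C' ∧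
    setDist G C C' ≤ (wt r C) ^ α

/-- Integer part of an extended nonnegative real, valued in `ℕ∞`. -/
noncomputable def efloor (x : ℝ≥0∞) : ℕ∞ :=
  if x = ⊤ then ⊤ else (⌊x.toReal⌋₊ : ℕ∞)

/-- The bound `max(w log₂ w / 2, 0)` (for `α = 1`), resp. `w^α/(2^α-2)` (for `α ≠ 1`),
on the diameter of a cluster of total weight `w`. -/
noncomputable def diamBound (α : ℝ) (w : ℝ≥0∞) : ℝ≥0∞ :=
  if α = 1 then
    (if w = ⊤ then ⊤ else ENNReal.ofReal (max (w.toReal * Real.logb 2 w.toReal / 2) 0))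
  else w ^ α / ((2 : ℝ≥0∞) ^ α - 2)

/-- The relation `C →η C'` on clusters of the CMP:  `d(C,C') ≤ η·r(C)^α`. -/
def EtaDesc (G : SimpleGraph V) (r : V → ℝ≥0) (α η : ℝ) (C C' : Set V) : Prop :=
  C ∈ (CMP G r α).classes ∧ C' ∈ (CMP G r α).classes ∧ C ≠ C' ∧
    setDist G C C' ≤ ENNReal.ofReal η * (wt r C) ^ α

/-- The `η`-stabiliser of a vertex `x`: the union of `𝒞_x` together with all clusters
reachable from `𝒞_x` by a finite oriented path for the relation `→η`. -/
def etaStab (G : SimpleGraph V) (r : V → ℝ≥0) (α η : ℝ) (x : V) : Set V :=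
  ⋃₀ {C' | Relation.ReflTransGen (EtaDesc G r α η) (cluster G r α x) C'}

/-- The path graph on `ℕ`: `m` and `m+1` are adjacent. -/
def pathGraphN : SimpleGraph ℕ := SimpleGraph.fromRel (fun m n => n = m + 1)

/-- The two-sided path graph on `ℤ`: `k` and `k+1` are adjacent. -/
def pathGraphZ : SimpleGraph ℤ := SimpleGraph.fromRel (fun a b => b = a + 1)

/-- The hypercubic lattice `ℤ^d`: `x` and `y` are adjacent iff `‖x-y‖₁ = 1`. -/
def latticeGraph (d : ℕ) : SimpleGraph (Fin d → ℤ) :=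
  SimpleGraph.fromRel (fun x y => (∑ i, |x i - y i|) = 1)

/-- The CMP of the weighted graph `(G, r)` with expansion exponent `α` has an
infinite cluster. -/
def HasInfiniteCluster (G : SimpleGraph V) (r : V → ℝ≥0) (α : ℝ) : Prop :=
  ∃ C ∈ (CMP G r α).classes, C.Infinite

/-- `w` is an i.i.d. family of Bernoulli(`p`) weights indexed by `V`, under the
probability measure `μ`. -/
def IsBernoulliField {Ω : Type*} [MeasurableSpace Ω] (μ : Measure Ω)
    (p : ℝ) (w : Ω → V → ℝ≥0) : Prop :=
  (∀ x : V, Measurable fun ω => w ω x) ∧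
  (∀ ω x, w ω x = 0 ∨ w ω x = 1) ∧
  (∀ x : V, μ {ω | w ω x = 1} = ENNReal.ofReal p) ∧
  ProbabilityTheory.iIndepFun (fun x ω => w ω x) μ

/-- `w` is an i.i.d. family of weights indexed by `V`, each with law `ν`, under the
probability measure `μ`. -/
def IsIIDField {Ω : Type*} [MeasurableSpace Ω] (μ : Measure Ω)
    (ν : Measure ℝ≥0) (w : Ω → V → ℝ≥0) : Prop :=
  (∀ x : V, Measurable fun ω => w ω x) ∧
  (∀ x : V, μ.map (fun ω => w ω x) = ν) ∧
  ProbabilityTheory.iIndepFun (fun x ω => w ω x) μ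


section MergingAux

variable {V : Type*}

lemma wt_mono (r : V → ℝ≥0) {A B : Set V} (h : A ⊆ B) : wt r A ≤ wt r B := by
  rw [wt, wt, tsum_subtype A (fun v => (r v : ℝ≥0∞)),
    tsum_subtype B (fun v => (r v : ℝ≥0∞))]
  exact ENNReal.tsum_le_tsum fun u =>
    Set.indicator_le_indicator_apply_of_subset h zero_le

lemma wt_union_disjoint (r : V → ℝ≥0) {A B : Set V} (h : Disjoint A B) :
    wt r (A ∪ B) = wt r A + wt r B := by
  rw [wt, wt, wt]
  exact ENNReal.summable.tsum_union_disjoint (f := fun v => (r v : ℝ≥0∞)) h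
    ENNReal.summable

lemma setDist_le (G : SimpleGraph V) {A B : Set V} {x y : V} (hx : x ∈ A) (hy : y ∈ B) :
    setDist G A B ≤ (G.dist x y : ℝ≥0∞) := by
  rw [setDist]
  exact iInf_le_of_le ⟨x, hx⟩ (iInf_le_of_le ⟨y, hy⟩ le_rfl)

lemma setDist_attained (G : SimpleGraph V) {A B : Set V} (hA : A.Nonempty) (hB : B.Nonempty) :
    ∃ x ∈ A, ∃ y ∈ B, (G.dist x y : ℝ≥0∞) = setDist G A B := by
  set S : Set ℕ := {n | ∃ x ∈ A, ∃ y ∈ B, G.dist x y = n} with hSdef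
  obtain ⟨a, ha⟩ := hA
  obtain ⟨b, hb⟩ := hB
  have hne : S.Nonempty := ⟨G.dist a b, a, ha, b, hb, rfl⟩
  obtain ⟨x, hx, y, hy, hxy⟩ := Nat.sInf_mem hne
  refine ⟨x, hx, y, hy, le_antisymm ?_ (setDist_le G hx hy)⟩
  rw [setDist]
  refine le_iInf fun p => le_iInf fun q => ?_
  have h1 : G.dist x y ≤ G.dist p.1 q.1 :=
    hxy.trans_le (Nat.sInf_le ⟨p.1, p.2, q.1, q.2, rfl⟩)
  exact_mod_cast Nat.cast_le.mpr h1

/-- The merged equivalence relation of the clusters of `p` and `q`. -/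
def mergeRel (s : Setoid V) (p q : V) : Setoid V where
  r z u := s z u ∨ (s z p ∧ s q u) ∨ (s z q ∧ s p u)
  iseqv := by
    constructor
    · exact fun z => Or.inl (s.refl' z)
    · rintro z u (h | ⟨h1, h2⟩ | ⟨h1, h2⟩)
      · exact Or.inl (s.symm' h)
      · exact Or.inr (Or.inr ⟨s.symm' h2, s.symm' h1⟩)
      · exact Or.inr (Or.inl ⟨s.symm' h2, s.symm' h1⟩)
    · rintro z u w (h | ⟨h1, h2⟩ | ⟨h1, h2⟩) (h' | ⟨h1', h2'⟩ | ⟨h1', h2'⟩)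
      · exact Or.inl (s.trans' h h')
      · exact Or.inr (Or.inl ⟨s.trans' h h1', h2'⟩)
      · exact Or.inr (Or.inr ⟨s.trans' h h1', h2'⟩)
      · exact Or.inr (Or.inl ⟨h1, s.trans' h2 h'⟩)
      · exact Or.inr (Or.inr ⟨s.trans' h1 (s.symm' (s.trans' h2 h1')),
          s.trans' (s.symm' (s.trans' h2 h1')) h2'⟩)
      · exact Or.inl (s.trans' h1 h2')
      · exact Or.inr (Or.inr ⟨h1, s.trans' h2 h'⟩)
      · exact Or.inl (s.trans' h1 h2')
      · exact Or.inr (Or.inl ⟨s.trans' h1 (s.symm' (s.trans' h2 h1')),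
          s.trans' (s.symm' (s.trans' h2 h1')) h2'⟩)

lemma mergeRel_apply {s : Setoid V} {p q z u : V} :
    mergeRel s p q z u ↔ s z u ∨ (s z p ∧ s q u) ∨ (s z q ∧ s p u) := Iff.rfl

lemma sInf_merge_eq (s : Setoid V) (p q : V) :
    sInf {t : Setoid V | s ≤ t ∧ t p q} = mergeRel s p q := by
  apply le_antisymm
  · refine sInf_le ⟨Setoid.le_def.mpr fun h => Or.inl h, ?_⟩
    exact Or.inr (Or.inl ⟨s.refl' p, s.refl' q⟩)
  · refine le_sInf fun t ht => Setoid.le_def.mpr fun {z u} h => ?_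
    obtain ⟨hst, htpq⟩ := ht
    rcases h with h | ⟨h1, h2⟩ | ⟨h1, h2⟩
    · exact Setoid.le_def.mp hst h
    · exact t.trans' (Setoid.le_def.mp hst h1) (t.trans' htpq (Setoid.le_def.mp hst h2))
    · exact t.trans' (Setoid.le_def.mp hst h1)
        (t.trans' (t.symm' htpq) (Setoid.le_def.mp hst h2))

lemma mergeRel_class_left {s : Setoid V} {p q z : V} (hpq : ¬ s p q) (hzp : s z p) :
    {u | mergeRel s p q z u} = {u | s z u} ∪ {u | s q u} := by
  ext u
  simp only [Set.mem_setOf_eq, Set.mem_union, mergeRel_apply]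
  constructor
  · rintro (h | ⟨h1, h2⟩ | ⟨h1, h2⟩)
    · exact Or.inl h
    · exact Or.inr h2
    · exact absurd (s.trans' (s.symm' hzp) h1) hpq
  · rintro (h | h)
    · exact Or.inl h
    · exact Or.inr (Or.inl ⟨hzp, h⟩)

lemma mergeRel_class_right {s : Setoid V} {p q z : V} (hpq : ¬ s p q) (hzq : s z q) :
    {u | mergeRel s p q z u} = {u | s z u} ∪ {u | s p u} := by
  ext u
  simp only [Set.mem_setOf_eq, Set.mem_union, mergeRel_apply]
  constructor
  · rintro (h | ⟨h1, h2⟩ | ⟨h1, h2⟩)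
    · exact Or.inl h
    · exact absurd (s.symm' (s.trans' (s.symm' hzq) h1)) hpq
    · exact Or.inr h2
  · rintro (h | h)
    · exact Or.inl h
    · exact Or.inr (Or.inr ⟨hzq, h⟩)

lemma mergeRel_class_none {s : Setoid V} {p q z : V} (hzp : ¬ s z p) (hzq : ¬ s z q) :
    {u | mergeRel s p q z u} = {u | s z u} := by
  ext u
  simp only [Set.mem_setOf_eq, mergeRel_apply]
  constructor
  · rintro (h | ⟨h1, h2⟩ | ⟨h1, h2⟩)
    · exact h
    · exact absurd h1 hzp
    · exact absurd h1 hzq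
  · exact fun h => Or.inl h

/-- Any relation dominated by the CMP whose clusters of `x` and `y` are close enough forces
`x` and `y` to be CMP-related. -/
lemma rel_CMP_of_dist_le (G : SimpleGraph V) (r : V → ℝ≥0) {α : ℝ} (hα : 0 ≤ α)
    {s : Setoid V} (hs : s ≤ CMP G r α) {x y : V}
    (hd : (G.dist x y : ℝ≥0∞) ≤ (min (wt r {u | s x u}) (wt r {u | s y u})) ^ α) :
    CMP G r α x y := by
  show ∀ t ∈ {t : Setoid V | Admissible G r α t}, t x y
  intro t ht
  by_contra htxy
  have hCt : CMP G r α ≤ t := sInf_le ht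
  have hst : s ≤ t := hs.trans hCt
  have hxsub : {u | s x u} ⊆ {u | t u x} :=
    fun u hu => t.symm' (Setoid.le_def.mp hst hu)
  have hysub : {u | s y u} ⊆ {u | t u y} :=
    fun u hu => t.symm' (Setoid.le_def.mp hst hu)
  have hne : ({u | t u x} : Set V) ≠ {u | t u y} := by
    intro h
    exact htxy ((Set.ext_iff.mp h x).mp (t.refl' x))
  have hadm := ht _ (t.mem_classes x) _ (t.mem_classes y) hne
  have h1 : setDist G {u | t u x} {u | t u y} ≤ (G.dist x y : ℝ≥0∞) :=
    setDist_le G (t.refl' x) (t.refl' y)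
  have h2 : (min (wt r {u | s x u}) (wt r {u | s y u})) ^ α ≤
      (min (wt r {u | t u x}) (wt r {u | t u y})) ^ α :=
    ENNReal.rpow_le_rpow (min_le_min (wt_mono r hxsub) (wt_mono r hysub)) hα
  exact absurd (((hadm.trans_le h1).trans_le hd).trans_le h2) (lt_irrefl _)

end MergingAux

/-- Starting from the finest partition and repeatedly applying the merging operators
`M_{x_n,y_n}`, where every pair of distinct vertices appears infinitely often in the
sequence, yields an increasing sequence of partitions whose limit is the CMP
(in particular it does not depend on the chosen sequence). -/
theorem merging_procedure_converges_to_CMP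
    {V : Type*} (G : SimpleGraph V) (hconn : G.Connected)
    (hlf : ∀ v : V, (G.neighborSet v).Finite)
    (r : V → ℝ≥0) (α : ℝ) (hα : 1 ≤ α)
    (xy : ℕ → V × V)
    (hxy : ∀ x y : V, x ≠ y → {n : ℕ | xy n = (x, y) ∨ xy n = (y, x)}.Infinite)
    (C : ℕ → Setoid V) (hC0 : C 0 = ⊥)
    (hCsucc : ∀ n, C (n + 1) = mergeOp G r α (xy n).1 (xy n).2 (C n)) :
    (∀ n, C n ≤ C (n + 1)) ∧
    (∀ u v : V, (CMP G r α) u v ↔ ∃ n, (C n) u v) := by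
  have hα0 : (0:ℝ) ≤ α := zero_le_one.trans hα
  have hmono1 : ∀ n, C n ≤ C (n + 1) := by
    intro n
    rw [hCsucc n]
    unfold mergeOp
    split_ifs with h
    · exact le_sInf fun t ht => ht.1
    · exact le_rfl
  have hmono : Monotone C := monotone_nat_of_le_succ hmono1
  have hclsub : ∀ {m n : ℕ}, m ≤ n → ∀ (z : V), {u | C m z u} ⊆ {u | C n z u} :=
    fun h z u hu => Setoid.le_def.mp (hmono h) hu
  have hle : ∀ n, C n ≤ CMP G r α := by
    intro n
    induction n with
    | zero => rw [hC0]; exact bot_le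
    | succ n ih =>
      rw [hCsucc n]
      unfold mergeOp
      split_ifs with h
      · exact sInf_le ⟨ih, rel_CMP_of_dist_le G r hα0 ih h.2⟩
      · exact ih
  -- the limit setoid
  set L : Setoid V := ⟨fun u v => ∃ n, C n u v,
    ⟨fun u => ⟨0, (C 0).refl' u⟩,
     fun h => ⟨h.choose, (C h.choose).symm' h.choose_spec⟩,
     fun {a b c} h h' => by
      obtain ⟨m, hm⟩ := h
      obtain ⟨n, hn⟩ := h'
      exact ⟨max m n, (C (max m n)).trans'
        (Setoid.le_def.mp (hmono (le_max_left m n)) hm)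
        (Setoid.le_def.mp (hmono (le_max_right m n)) hn)⟩⟩⟩ with hLdef
  have hLrel : ∀ u v : V, L u v ↔ ∃ n, C n u v := fun u v => Iff.rfl
  -- the key growth step
  have hstep : ∀ (m : ℕ) (z : V), {u | C (m+1) z u} ≠ {u | C m z u} →
      wt r {u | C m z u} + 1 ≤ wt r {u | C (m+1) z u} := by
    intro m z hne
    rw [hCsucc m] at hne ⊢
    unfold mergeOp at hne ⊢
    split_ifs at hne ⊢ with h
    · rw [if_pos h] at hne ⊢; obtain ⟨hpq, hdle⟩ := h
      rw [sInf_merge_eq] at hne ⊢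
      have hne' : (xy m).1 ≠ (xy m).2 := fun hh => hpq (hh ▸ (C m).refl' (xy m).1)
      have h1d : (1:ℝ≥0∞) ≤ (G.dist (xy m).1 (xy m).2 : ℝ≥0∞) := by
        exact_mod_cast hconn.pos_dist_of_ne hne'
      have h1m : (1:ℝ≥0∞) ≤
          min (wt r {u | C m (xy m).1 u}) (wt r {u | C m (xy m).2 u}) := by
        by_contra hc
        push_neg at hc
        have h2 := ENNReal.rpow_le_rpow_of_exponent_ge hc.le hα
        rw [ENNReal.rpow_one] at h2
        exact absurd ((h1d.trans hdle).trans h2) hc.not_ge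
      by_cases hzp : C m z (xy m).1
      · have hset := mergeRel_class_left (s := C m) hpq hzp
        have hdisj : Disjoint {u | C m z u} {u | C m (xy m).2 u} := by
          rw [Set.disjoint_left]
          intro u hu hu'
          exact hpq ((C m).trans' ((C m).symm' hzp) ((C m).trans' hu ((C m).symm' hu')))
        rw [hset, wt_union_disjoint r hdisj]
        exact add_le_add_right (h1m.trans (min_le_right _ _)) _
      · by_cases hzq : C m z (xy m).2
        · have hset := mergeRel_class_right (s := C m) hpq hzq
          have hdisj : Disjoint {u | C m z u} {u | C m (xy m).1 u} := by
            rw [Set.disjoint_left]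
            intro u hu hu'
            exact hpq ((C m).trans' ((C m).trans' hu' ((C m).symm' hu)) hzq)
          rw [hset, wt_union_disjoint r hdisj]
          exact add_le_add_right (h1m.trans (min_le_left _ _)) _
        · exact absurd (mergeRel_class_none hzp hzq) hne
    · rw [if_neg h] at hne; exact absurd rfl hne
  -- stabilize-or-grow
  have hgrow : ∀ (z : V) (d : ℕ), 1 ≤ d →
      (d:ℝ≥0∞) ≤ (wt r {u | ∃ n, C n z u}) ^ α →
      ∃ n, (d : ℝ≥0∞) ≤ (wt r {u | C n z u}) ^ α := by
    intro z d hd1 hD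
    by_cases hstab : ∃ N, ∀ m, N ≤ m → {u | C m z u} = {u | C N z u}
    · obtain ⟨N, hN⟩ := hstab
      refine ⟨N, ?_⟩
      have hlim : {u | ∃ n, C n z u} = {u | C N z u} := by
        ext u
        simp only [Set.mem_setOf_eq]
        constructor
        · rintro ⟨n, hn⟩
          have hmem : u ∈ {u | C (max n N) z u} := hclsub (le_max_left n N) z hn
          rwa [hN (max n N) (le_max_right n N)] at hmem
        · exact fun h => ⟨N, h⟩
      rwa [hlim] at hD
    · push_neg at hstab
      have hchange : ∀ N, ∃ m, N ≤ m ∧ {u | C (m+1) z u} ≠ {u | C m z u} := by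
        intro N
        by_contra hc
        push_neg at hc
        obtain ⟨m, hm, hne⟩ := hstab N
        apply hne
        clear hne
        induction m, hm using Nat.le_induction with
        | base => rfl
        | succ m hm ih => rw [hc m hm, ih]
      have hlarge : ∀ k : ℕ, ∃ n, (k : ℝ≥0∞) ≤ wt r {u | C n z u} := by
        intro k
        induction k with
        | zero => exact ⟨0, by simp⟩
        | succ k ih =>
          obtain ⟨n, hn⟩ := ih
          obtain ⟨m, hm, hnem⟩ := hchange n
          refine ⟨m + 1, ?_⟩
          have h1 := hstep m z hnem
          have h2 : wt r {u | C n z u} ≤ wt r {u | C m z u} :=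
            wt_mono r (hclsub hm z)
          calc ((k + 1 : ℕ) : ℝ≥0∞) = (k : ℝ≥0∞) + 1 := by push_cast; ring
          _ ≤ wt r {u | C m z u} + 1 := add_le_add_left (hn.trans h2) 1
          _ ≤ _ := h1
      obtain ⟨n, hn⟩ := hlarge d
      refine ⟨n, ?_⟩
      have h1 : (1:ℝ≥0∞) ≤ wt r {u | C n z u} :=
        le_trans (by exact_mod_cast hd1) hn
      exact hn.trans (ENNReal.le_rpow_self_of_one_le h1 hα)
  -- the limit is admissible
  have hLadm : Admissible G r α L := by
    intro D hD D' hD' hne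
    by_contra hcon
    have hcon' : setDist G D D' ≤ (min (wt r D) (wt r D')) ^ α := not_lt.mp hcon
    have hDne : D.Nonempty := by
      obtain ⟨z, hz⟩ := hD
      exact ⟨z, by rw [hz]; exact L.refl' z⟩
    have hD'ne : D'.Nonempty := by
      obtain ⟨z, hz⟩ := hD'
      exact ⟨z, by rw [hz]; exact L.refl' z⟩
    obtain ⟨x₀, hx₀, y₀, hy₀, hdist⟩ := setDist_attained G hDne hD'ne
    have hxyne : x₀ ≠ y₀ := by
      intro h
      exact hne (Setoid.eq_of_mem_classes hD hx₀ hD' (h ▸ hy₀))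
    have hd1 : 1 ≤ G.dist x₀ y₀ := hconn.pos_dist_of_ne hxyne
    have hDx : D = {u | ∃ n, C n x₀ u} := by
      obtain ⟨z, hz⟩ := hD
      subst hz
      ext u
      simp only [Set.mem_setOf_eq] at hx₀ ⊢
      constructor
      · intro h
        exact (hLrel x₀ u).mp (L.trans' hx₀ (L.symm' h))
      · intro h
        exact L.trans' (L.symm' ((hLrel x₀ u).mpr h)) hx₀
    have hDy : D' = {u | ∃ n, C n y₀ u} := by
      obtain ⟨z, hz⟩ := hD'
      subst hz
      ext u
      simp only [Set.mem_setOf_eq] at hy₀ ⊢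
      constructor
      · intro h
        exact (hLrel y₀ u).mp (L.trans' hy₀ (L.symm' h))
      · intro h
        exact L.trans' (L.symm' ((hLrel y₀ u).mpr h)) hy₀
    have hdx : (G.dist x₀ y₀ : ℝ≥0∞) ≤ (wt r {u | ∃ n, C n x₀ u}) ^ α := by
      rw [← hDx]
      exact (hdist.trans_le hcon').trans
        (ENNReal.rpow_le_rpow (min_le_left _ _) hα0)
    have hdy : (G.dist x₀ y₀ : ℝ≥0∞) ≤ (wt r {u | ∃ n, C n y₀ u}) ^ α := by
      rw [← hDy]
      exact (hdist.trans_le hcon').trans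
        (ENNReal.rpow_le_rpow (min_le_right _ _) hα0)
    obtain ⟨n₁, hn₁⟩ := hgrow x₀ (G.dist x₀ y₀) hd1 hdx
    obtain ⟨n₂, hn₂⟩ := hgrow y₀ (G.dist x₀ y₀) hd1 hdy
    obtain ⟨m, hmmem, hmgt⟩ := (hxy x₀ y₀ hxyne).exists_gt (max n₁ n₂)
    have hnL : ¬ ∃ n, (C n) x₀ y₀ := by
      intro h
      have hy₀D : y₀ ∈ D := by rw [hDx]; exact h
      exact hne (Setoid.eq_of_mem_classes hD hy₀D hD' hy₀)
    have hCm : ¬ (C m) x₀ y₀ := fun h => hnL ⟨m, h⟩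
    have hwx : (G.dist x₀ y₀ : ℝ≥0∞) ≤ (wt r {u | C m x₀ u}) ^ α :=
      hn₁.trans (ENNReal.rpow_le_rpow
        (wt_mono r (hclsub ((le_max_left n₁ n₂).trans hmgt.le) x₀)) hα0)
    have hwy : (G.dist x₀ y₀ : ℝ≥0∞) ≤ (wt r {u | C m y₀ u}) ^ α :=
      hn₂.trans (ENNReal.rpow_le_rpow
        (wt_mono r (hclsub ((le_max_right n₁ n₂).trans hmgt.le) y₀)) hα0)
    have hminxy : (G.dist x₀ y₀ : ℝ≥0∞) ≤
        (min (wt r {u | C m x₀ u}) (wt r {u | C m y₀ u})) ^ α := by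
      rcases min_cases (wt r {u | C m x₀ u}) (wt r {u | C m y₀ u}) with
        ⟨hmin, _⟩ | ⟨hmin, _⟩ <;> rw [hmin]
      · exact hwx
      · exact hwy
    have key : (C (m+1)) x₀ y₀ := by
      rw [hCsucc m]
      unfold mergeOp
      rcases hmmem with h | h
      · rw [h]
        rw [if_pos ⟨hCm, hminxy⟩, sInf_merge_eq]
        exact Or.inr (Or.inl ⟨(C m).refl' x₀, (C m).refl' y₀⟩)
      · rw [h]
        have hCm' : ¬ (C m) y₀ x₀ := fun hh => hCm ((C m).symm' hh)
        have hmin' : (G.dist y₀ x₀ : ℝ≥0∞) ≤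
            (min (wt r {u | C m y₀ u}) (wt r {u | C m x₀ u})) ^ α := by
          rw [G.dist_comm, min_comm]
          exact hminxy
        rw [if_pos ⟨hCm', hmin'⟩, sInf_merge_eq]
        exact Or.inr (Or.inr ⟨(C m).refl' x₀, (C m).refl' y₀⟩)
    exact hnL ⟨m + 1, key⟩
  have hCMPle : CMP G r α ≤ L := sInf_le hLadm
  refine ⟨hmono1, fun u v => ⟨fun h => ?_, fun h => ?_⟩⟩
  · exact (hLrel u v).mp (Setoid.le_def.mp hCMPle h)
  · obtain ⟨n, hn⟩ := h
    exact Setoid.le_def.mp (hle n) hn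

end CMPPaper
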